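/- For any ideal i of A with annihilator j in A, the f-orthogonal complement of iV in V equals jV, i.e., (iV)^⊥ = jV where U^⊥ = {v ∈ V : f(v,U) = 0}. -/

import Mathlib

open Polynomial

noncomputable section

variable (R : Type) [CommRing R] [IsLocalRing R] [IsPrincipalIdealRing R] [Finite R]
variable (p : R) (ℓ q : ℕ)

/-- The ramified extension `A = R[X]/(X² - p, X^{2ℓ-1})`. -/
abbrev Aext : Type :=
  Polynomial R ⧸ Ideal.span ({X ^ 2 - C p, X ^ (2 * ℓ - 1)} : Set (Polynomial R))

/-- The image `π` of `X` in `A`. -/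
def piA : Aext R p ℓ :=
  Ideal.Quotient.mk (Ideal.span ({X ^ 2 - C p, X ^ (2 * ℓ - 1)} : Set (Polynomial R))) X

set_option linter.unusedSectionVars false

namespace Stmt9Aux

lemma alg_eq (r : R) : algebraMap R (Aext R p ℓ) r =
    Ideal.Quotient.mk (Ideal.span ({X ^ 2 - C p, X ^ (2 * ℓ - 1)} : Set (Polynomial R))) (C r) :=
  rfl

lemma pi_sq : piA R p ℓ ^ 2 = algebraMap R (Aext R p ℓ) p := by
  rw [alg_eq, piA, ← map_pow, Ideal.Quotient.eq]
  exact Ideal.subset_span (by simp)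

lemma pi_top : piA R p ℓ ^ (2 * ℓ - 1) = 0 := by
  rw [piA, ← map_pow, Ideal.Quotient.eq_zero_iff_mem]
  exact Ideal.subset_span (by simp)

lemma exists_repr [Nontrivial R] (x : Aext R p ℓ) :
    ∃ a b : R, x = algebraMap R (Aext R p ℓ) a + algebraMap R (Aext R p ℓ) b * piA R p ℓ := by
  obtain ⟨g, rfl⟩ := Ideal.Quotient.mk_surjective x
  set m : R[X] := X ^ 2 - C p with hm
  have hmon : m.Monic := monic_X_pow_sub_C p (by norm_num)
  have hdeg : (g %ₘ m).degree ≤ 1 := by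
    have h2 := degree_modByMonic_lt g hmon
    rw [hm, degree_X_pow_sub_C (by norm_num)] at h2
    exact Order.le_of_lt_succ (by exact_mod_cast h2)
  refine ⟨(g %ₘ m).coeff 0, (g %ₘ m).coeff 1, ?_⟩
  conv_lhs => rw [← modByMonic_add_div g m]
  rw [map_add, alg_eq, alg_eq, piA, ← map_mul]
  have hz : (Ideal.Quotient.mk (Ideal.span ({X ^ 2 - C p, X ^ (2 * ℓ - 1)} : Set (Polynomial R))))
      (m * (g /ₘ m)) = 0 := by
    rw [Ideal.Quotient.eq_zero_iff_mem]
    exact Ideal.mul_mem_right _ _ (Ideal.subset_span (by simp [hm]))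
  rw [hz, add_zero]
  conv_lhs => rw [eq_X_add_C_of_degree_le_one hdeg]
  rw [map_add, add_comm]

lemma alg_inj (hℓ : 1 ≤ ℓ) (hp : p ^ ℓ = 0) {r : R}
    (hr : algebraMap R (Aext R p ℓ) r = 0) : r = 0 := by
  rw [alg_eq, Ideal.Quotient.eq_zero_iff_mem, Ideal.mem_span_pair] at hr
  obtain ⟨a, b, hab⟩ := hr
  have h1 : ∑ i ∈ Finset.range ℓ, p ^ i * (C r).coeff (2 * i) = r := by
    rw [Finset.sum_eq_single_of_mem 0 (Finset.mem_range.mpr hℓ)]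
    · simp
    · intro i _ hi
      rw [coeff_C, if_neg (by omega), mul_zero]
  rw [← hab] at h1
  have h2 : ∀ i, (a * (X ^ 2 - C p) + b * X ^ (2 * ℓ - 1)).coeff (2 * i)
      = (if 2 ≤ 2 * i then a.coeff (2 * i - 2) else 0) - p * a.coeff (2 * i)
        + (if 2 * ℓ - 1 ≤ 2 * i then b.coeff (2 * i - (2 * ℓ - 1)) else 0) := by
    intro i
    rw [coeff_add, mul_sub, coeff_sub, coeff_mul_X_pow', coeff_mul_X_pow']
    have hc : (a * C p).coeff (2 * i) = p * a.coeff (2 * i) := by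
      rw [mul_comm, coeff_C_mul]
    rw [hc]
  have h3 : ∑ i ∈ Finset.range ℓ,
      p ^ i * ((a * (X ^ 2 - C p) + b * X ^ (2 * ℓ - 1)).coeff (2 * i)) = 0 := by
    have e1 : ∀ i ∈ Finset.range ℓ,
        p ^ i * ((a * (X ^ 2 - C p) + b * X ^ (2 * ℓ - 1)).coeff (2 * i))
        = p ^ i * (if 2 ≤ 2 * i then a.coeff (2 * i - 2) else 0)
          - p ^ (i + 1) * a.coeff (2 * i) := by
      intro i hi
      rw [Finset.mem_range] at hi
      rw [h2 i, if_neg (show ¬ (2 * ℓ - 1 ≤ 2 * i) by omega)]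
      ring
    rw [Finset.sum_congr rfl e1, Finset.sum_sub_distrib]
    obtain ⟨ℓ', rfl⟩ : ∃ ℓ', ℓ = ℓ' + 1 := ⟨ℓ - 1, by omega⟩
    rw [Finset.sum_range_succ', Finset.sum_range_succ]
    have e2 : ∀ i ∈ Finset.range ℓ',
        p ^ (i + 1) * (if 2 ≤ 2 * (i + 1) then a.coeff (2 * (i + 1) - 2) else 0)
        = p ^ (i + 1) * a.coeff (2 * i) := by
      intro i _
      rw [if_pos (by omega), show 2 * (i + 1) - 2 = 2 * i by omega]
    rw [Finset.sum_congr rfl e2, if_neg (by omega : ¬ 2 ≤ 2 * 0), hp]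
    ring
  rw [h3] at h1
  exact h1.symm

lemma exists_val (hmax : IsLocalRing.maximalIdeal R = Ideal.span {p})
    (hp : p ^ ℓ = 0) (r : R) : ∃ (u : Rˣ) (s : ℕ), r = ↑u * p ^ s := by
  have main : ∀ (k : ℕ) (r : R), r ∉ Ideal.span {p} ^ k → ∃ (u : Rˣ) (s : ℕ), r = ↑u * p ^ s := by
    intro k
    induction k with
    | zero => intro r hr; exact absurd (by simp) hr
    | succ k ih =>
      intro r hr
      by_cases h1 : r ∈ Ideal.span ({p} : Set R)
      · obtain ⟨c, hc⟩ := Ideal.mem_span_singleton'.mp h1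
        have hck : c ∉ Ideal.span ({p} : Set R) ^ k := by
          intro hcmem
          exact hr (by rw [pow_succ, ← hc]
                       exact Ideal.mul_mem_mul hcmem (Ideal.mem_span_singleton_self p))
        obtain ⟨u, s, rfl⟩ := ih c hck
        exact ⟨u, s + 1, by rw [← hc]; ring⟩
      · have hu : IsUnit r := by
          by_contra hnu
          exact h1 (hmax ▸ (IsLocalRing.mem_maximalIdeal r).mpr hnu)
        obtain ⟨u, rfl⟩ := hu
        exact ⟨u, 0, by simp⟩
  rcases eq_or_ne r 0 with rfl | hr
  · exact ⟨1, ℓ, by simp [hp]⟩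
  · refine main ℓ r ?_
    rw [Ideal.span_singleton_pow, hp, Ideal.span_singleton_eq_bot.mpr rfl]
    simpa using hr

lemma pi_nilpotent (hℓ : 1 ≤ ℓ) : IsNilpotent (piA R p ℓ) :=
  ⟨2 * ℓ - 1, pi_top R p ℓ⟩

lemma alg_pow_val (u : Rˣ) (s : ℕ) :
    algebraMap R (Aext R p ℓ) (↑u * p ^ s)
      = algebraMap R (Aext R p ℓ) ↑u * piA R p ℓ ^ (2 * s) := by
  rw [map_mul, map_pow, ← pi_sq, ← pow_mul]

lemma exists_unit_pow [Nontrivial R] (hℓ : 1 ≤ ℓ)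
    (hmax : IsLocalRing.maximalIdeal R = Ideal.span {p}) (hp : p ^ ℓ = 0)
    (x : Aext R p ℓ) :
    ∃ (u : (Aext R p ℓ)ˣ) (k : ℕ), x = ↑u * piA R p ℓ ^ k := by
  obtain ⟨a, b, rfl⟩ := exists_repr R p ℓ x
  obtain ⟨u, s, rfl⟩ := exists_val R p ℓ hmax hp a
  obtain ⟨w, t, rfl⟩ := exists_val R p ℓ hmax hp b
  have hu : IsUnit (algebraMap R (Aext R p ℓ) ↑u) := (u.isUnit).map _
  have hw : IsUnit (algebraMap R (Aext R p ℓ) ↑w) := (w.isUnit).map _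
  have hπ : IsNilpotent (piA R p ℓ) := pi_nilpotent R p ℓ hℓ
  have key : ∀ m : ℕ, 1 ≤ m → ∀ c : Aext R p ℓ,
      IsNilpotent (c * piA R p ℓ ^ m) := by
    intro m hm c
    obtain ⟨m', rfl⟩ : ∃ m', m = m' + 1 := ⟨m - 1, by omega⟩
    have e : c * piA R p ℓ ^ (m' + 1) = piA R p ℓ * (c * piA R p ℓ ^ m') := by ring
    rw [e]
    exact (Commute.all _ _).isNilpotent_mul_right hπ
  rcases le_or_gt s t with hst | hts
  · have hnil2 : IsNilpotent (algebraMap R (Aext R p ℓ) ↑w * piA R p ℓ ^ (2 * t + 1 - 2 * s)) :=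
      key _ (by omega) _
    have hunit : IsUnit (algebraMap R (Aext R p ℓ) ↑u
        + algebraMap R (Aext R p ℓ) ↑w * piA R p ℓ ^ (2 * t + 1 - 2 * s)) :=
      hnil2.isUnit_add_left_of_commute hu (Commute.all _ _)
    obtain ⟨u', hu'⟩ := hunit
    refine ⟨u', 2 * s, ?_⟩
    rw [hu', alg_pow_val R p ℓ, map_mul, map_pow, ← pi_sq, ← pow_mul, add_mul]
    congr 1
    have e2 : piA R p ℓ ^ (2 * t + 1 - 2 * s) * piA R p ℓ ^ (2 * s)
        = piA R p ℓ ^ (2 * t) * piA R p ℓ := by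
      rw [← pow_add, ← pow_succ]
      congr 1
      omega
    linear_combination (-(algebraMap R (Aext R p ℓ)) ↑w) * e2
  · have hnil2 : IsNilpotent (algebraMap R (Aext R p ℓ) ↑u * piA R p ℓ ^ (2 * s - (2 * t + 1))) :=
      key _ (by omega) _
    have hunit : IsUnit (algebraMap R (Aext R p ℓ) ↑w
        + algebraMap R (Aext R p ℓ) ↑u * piA R p ℓ ^ (2 * s - (2 * t + 1))) :=
      hnil2.isUnit_add_left_of_commute hw (Commute.all _ _)
    obtain ⟨u', hu'⟩ := hunit
    refine ⟨u', 2 * t + 1, ?_⟩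
    rw [hu', alg_pow_val R p ℓ, map_mul, map_pow, ← pi_sq, ← pow_mul]
    have e1 : piA R p ℓ ^ (2 * t + 1) = piA R p ℓ ^ (2 * t) * piA R p ℓ := pow_succ _ _
    have e2 : piA R p ℓ ^ (2 * s - (2 * t + 1)) * piA R p ℓ ^ (2 * t + 1) = piA R p ℓ ^ (2 * s) := by
      rw [← pow_add]
      congr 1
      omega
    linear_combination (-(algebraMap R (Aext R p ℓ)) ↑w) * e1
      + (-(algebraMap R (Aext R p ℓ)) ↑u) * e2

lemma sigma_multiple [Nontrivial R] (hℓ : 1 ≤ ℓ)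
    (hmax : IsLocalRing.maximalIdeal R = Ideal.span {p}) (hp : p ^ ℓ = 0)
    (σ : Aext R p ℓ →ₐ[R] Aext R p ℓ) (hσ : σ (piA R p ℓ) = - piA R p ℓ)
    (x : Aext R p ℓ) : ∃ y : Aext R p ℓ, σ x = y * x := by
  obtain ⟨u, k, rfl⟩ := exists_unit_pow R p ℓ hℓ hmax hp x
  refine ⟨σ ↑u * ↑u⁻¹ * (-1) ^ k, ?_⟩
  rw [map_mul, map_pow, hσ]
  have e : (- piA R p ℓ) ^ k = (-1) ^ k * piA R p ℓ ^ k := by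
    rw [show - piA R p ℓ = -1 * piA R p ℓ from by ring, mul_pow]
  rw [e]
  linear_combination (-(σ (↑u : Aext R p ℓ))) * (-1 : Aext R p ℓ) ^ k * piA R p ℓ ^ k * u.inv_mul

lemma sigma_repr (σ : Aext R p ℓ →ₐ[R] Aext R p ℓ) (hσ : σ (piA R p ℓ) = - piA R p ℓ)
    (a b : R) :
    σ (algebraMap R (Aext R p ℓ) a + algebraMap R (Aext R p ℓ) b * piA R p ℓ)
      = algebraMap R (Aext R p ℓ) a - algebraMap R (Aext R p ℓ) b * piA R p ℓ := by
  rw [map_add, map_mul, hσ, AlgHom.commutes, AlgHom.commutes]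
  ring

lemma sigma_sigma [Nontrivial R]
    (σ : Aext R p ℓ →ₐ[R] Aext R p ℓ) (hσ : σ (piA R p ℓ) = - piA R p ℓ)
    (x : Aext R p ℓ) : σ (σ x) = x := by
  obtain ⟨a, b, rfl⟩ := exists_repr R p ℓ x
  rw [sigma_repr R p ℓ σ hσ, map_sub, map_mul, hσ, AlgHom.commutes, AlgHom.commutes]
  ring

lemma trace_zero [Nontrivial R] (hℓ : 1 ≤ ℓ)
    (hmax : IsLocalRing.maximalIdeal R = Ideal.span {p}) (hp : p ^ ℓ = 0)
    (hp' : p ^ (ℓ - 1) ≠ 0) (h2 : IsUnit (2 : R))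
    (σ : Aext R p ℓ →ₐ[R] Aext R p ℓ) (hσ : σ (piA R p ℓ) = - piA R p ℓ)
    (x : Aext R p ℓ) (hx : x + σ x = 0)
    (hπx : piA R p ℓ * x + σ (piA R p ℓ * x) = 0) : x = 0 := by
  obtain ⟨a, b, rfl⟩ := exists_repr R p ℓ x
  rw [sigma_repr R p ℓ σ hσ] at hx
  have ha : a = 0 := by
    have h2a : algebraMap R (Aext R p ℓ) (2 * a) = 0 := by
      rw [map_mul, map_ofNat]
      linear_combination hx
    have := alg_inj R p ℓ hℓ hp h2a
    exact (h2.mul_right_eq_zero).mp this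
  subst ha
  rw [map_zero, zero_add] at hx hπx ⊢
  have hπb : piA R p ℓ * (algebraMap R (Aext R p ℓ) b * piA R p ℓ)
      = algebraMap R (Aext R p ℓ) (b * p) := by
    rw [map_mul]
    have : piA R p ℓ * (algebraMap R (Aext R p ℓ) b * piA R p ℓ)
        = algebraMap R (Aext R p ℓ) b * piA R p ℓ ^ 2 := by ring
    rw [this, pi_sq]
  rw [hπb] at hπx
  have hbp : b * p = 0 := by
    have h2bp : algebraMap R (Aext R p ℓ) (2 * (b * p)) = 0 := by
      rw [map_mul, map_ofNat]
      have hcst := AlgHom.commutes σ (b * p)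
      rw [hcst] at hπx
      linear_combination hπx
    have := alg_inj R p ℓ hℓ hp h2bp
    exact (h2.mul_right_eq_zero).mp this
  obtain ⟨u, s, rfl⟩ := exists_val R p ℓ hmax hp b
  rcases le_or_gt (ℓ - 1) s with hs | hs
  · rw [alg_pow_val R p ℓ]
    have : piA R p ℓ ^ (2 * s) * piA R p ℓ = piA R p ℓ ^ (2 * s + 1 - (2 * ℓ - 1)) *
        piA R p ℓ ^ (2 * ℓ - 1) := by
      rw [← pow_succ, ← pow_add]
      congr 1
      omega
    rw [mul_assoc, this, pi_top]
    ring
  · exfalso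
    have hps : p ^ (s + 1) = 0 := by
      have : (↑u : R) * p ^ (s + 1) = 0 := by
        rw [pow_succ, ← mul_assoc]
        exact hbp
      exact (u.isUnit.mul_right_eq_zero).mp this
    apply hp'
    have : p ^ (ℓ - 1) = p ^ (s + 1) * p ^ (ℓ - 1 - (s + 1)) := by
      rw [← pow_add]
      congr 1
      omega
    rw [this, hps, zero_mul]

end Stmt9Aux

theorem stmt9
    (hℓ : 1 ≤ ℓ)
    (hmax : IsLocalRing.maximalIdeal R = Ideal.span {p})
    (hnil : Ideal.span {p} ^ ℓ = (⊥ : Ideal R))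
    (hnil' : Ideal.span {p} ^ (ℓ - 1) ≠ (⊥ : Ideal R))
    (hq : Nat.card (IsLocalRing.ResidueField R) = q)
    (hodd : Odd q)
    (σ : Aext R p ℓ →ₐ[R] Aext R p ℓ)
    (hσ : σ (piA R p ℓ) = - piA R p ℓ)
    (V : Type) [AddCommGroup V] [Module (Aext R p ℓ) V] [Module R V]
    [IsScalarTower R (Aext R p ℓ) V]
    (n : ℕ) (hn : 1 ≤ n)
    (b : Module.Basis (Fin n ⊕ Fin n) (Aext R p ℓ) V)
    (h : V → V → Aext R p ℓ)
    (hadd : ∀ v v' w : V, h (v + v') w = h v w + h v' w)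
    (hs1 : ∀ (a : Aext R p ℓ) (v w : V), h (a • v) w = σ a * h v w)
    (hs2 : ∀ (a : Aext R p ℓ) (v w : V), h v (a • w) = a * h v w)
    (hsk : ∀ v w : V, h w v = - σ (h v w))
    (hb1 : ∀ i j, h (b (Sum.inl i)) (b (Sum.inr j)) = if i = j then 1 else 0)
    (hb2 : ∀ i j, h (b (Sum.inl i)) (b (Sum.inl j)) = 0)
    (hb3 : ∀ i j, h (b (Sum.inr i)) (b (Sum.inr j)) = 0)
    (f : V → V → R)
    (hf : ∀ v w : V, algebraMap R (Aext R p ℓ) (2 * f v w) = h v w + σ (h v w))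
    (I J : Ideal (Aext R p ℓ))
    (hJ : ∀ a : Aext R p ℓ, a ∈ J ↔ ∀ x ∈ I, a * x = 0) :
    ∀ v : V,
      (∀ w ∈ (I • (⊤ : Submodule (Aext R p ℓ) V) : Submodule (Aext R p ℓ) V), f v w = 0) ↔
      v ∈ (J • (⊤ : Submodule (Aext R p ℓ) V) : Submodule (Aext R p ℓ) V) := by
  intro v
  haveI hnontriv : Nontrivial R := by
    by_contra hns
    rw [not_nontrivial_iff_subsingleton] at hns
    exact hnil' (Subsingleton.elim _ _)
  have hp : p ^ ℓ = 0 := by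
    have h0 := hnil
    rwa [Ideal.span_singleton_pow, Ideal.span_singleton_eq_bot] at h0
  have hp' : p ^ (ℓ - 1) ≠ 0 := by
    intro h0
    apply hnil'
    rw [Ideal.span_singleton_pow, Ideal.span_singleton_eq_bot]
    exact h0
  have h2R : IsUnit (2 : R) := by
    by_contra h2
    have hm : (2 : R) ∈ IsLocalRing.maximalIdeal R := (IsLocalRing.mem_maximalIdeal _).mpr h2
    have h2k : (2 : IsLocalRing.ResidueField R) = 0 := by
      have h0 : IsLocalRing.residue R 2 = 0 := Ideal.Quotient.eq_zero_iff_mem.mpr hm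
      rwa [map_ofNat] at h0
    have hord : addOrderOf (1 : IsLocalRing.ResidueField R) ∣ 2 :=
      addOrderOf_dvd_iff_nsmul_eq_zero.mpr (by
        rw [nsmul_eq_mul, Nat.cast_ofNat, mul_one]
        exact h2k)
    have h1 : addOrderOf (1 : IsLocalRing.ResidueField R) ≠ 1 := by
      simp only [ne_eq, AddMonoid.addOrderOf_eq_one_iff]
      exact one_ne_zero
    have hord2 : addOrderOf (1 : IsLocalRing.ResidueField R) = 2 := by
      rcases (Nat.dvd_prime Nat.prime_two).mp hord with h' | h'
      · exact absurd h' h1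
      · exact h'
    have hdvd : (2 : ℕ) ∣ q := by
      rw [← hq, ← hord2]
      exact addOrderOf_dvd_natCard _
    obtain ⟨m, hm'⟩ := hdvd
    obtain ⟨m', hm''⟩ := hodd
    omega
  have hinj : ∀ r : R, algebraMap R (Aext R p ℓ) r = 0 → r = 0 :=
    fun r hr => Stmt9Aux.alg_inj R p ℓ hℓ hp hr
  have hadd2 : ∀ u w w' : V, h u (w + w') = h u w + h u w' := by
    intro u w w'
    rw [hsk (w + w') u, hadd, map_add, neg_add, ← hsk w u, ← hsk w' u]
  have hcoord1 : ∀ (u : V) (j : Fin n), h u (b (Sum.inr j)) = σ (b.repr u (Sum.inl j)) := by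
    intro u j
    let G : V →+ Aext R p ℓ :=
      AddMonoidHom.mk' (fun z => h z (b (Sum.inr j))) (fun x y => hadd x y _)
    have hGu : h u (b (Sum.inr j)) = G u := rfl
    rw [hGu]
    conv_lhs => rw [← b.sum_repr u]
    rw [map_sum]
    have e : ∀ m, G (b.repr u m • b m) = σ (b.repr u m) * h (b m) (b (Sum.inr j)) :=
      fun m => hs1 _ _ _
    rw [Finset.sum_congr rfl (fun m _ => e m), Fintype.sum_sum_type]
    simp [hb1, hb3, mul_ite]
  have hcoord2 : ∀ (u : V) (j : Fin n), h u (b (Sum.inl j)) = - σ (b.repr u (Sum.inr j)) := by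
    intro u j
    let G : V →+ Aext R p ℓ :=
      AddMonoidHom.mk' (fun z => h z (b (Sum.inl j))) (fun x y => hadd x y _)
    have hGu : h u (b (Sum.inl j)) = G u := rfl
    rw [hGu]
    conv_lhs => rw [← b.sum_repr u]
    rw [map_sum]
    have e : ∀ m, G (b.repr u m • b m) = σ (b.repr u m) * h (b m) (b (Sum.inl j)) :=
      fun m => hs1 _ _ _
    have e2 : ∀ i : Fin n, h (b (Sum.inr i)) (b (Sum.inl j)) = - (if j = i then 1 else 0) := by
      intro i
      rw [hsk (b (Sum.inl j)) (b (Sum.inr i)), hb1, apply_ite σ, map_one, map_zero]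
    rw [Finset.sum_congr rfl (fun m _ => e m), Fintype.sum_sum_type]
    simp only [hb2, mul_zero, Finset.sum_const_zero, zero_add, e2]
    have e3 : ∀ i : Fin n,
        σ ((b.repr u) (Sum.inr i)) * -(if j = i then 1 else 0)
          = (if j = i then -σ ((b.repr u) (Sum.inr i)) else 0) := by
      intro i
      rcases eq_or_ne j i with rfl | hji
      · rw [if_pos rfl, if_pos rfl]
        ring
      · rw [if_neg hji, if_neg hji]
        ring
    rw [Finset.sum_congr rfl (fun i _ => e3 i), Finset.sum_ite_eq]
    simp only [Finset.mem_univ, if_true]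
  have hmem : ∀ (K : Ideal (Aext R p ℓ)) (u : V),
      u ∈ (K • (⊤ : Submodule (Aext R p ℓ) V)) ↔ ∀ k, b.repr u k ∈ K := by
    intro K u
    constructor
    · intro hu k
      refine Submodule.smul_induction_on (p := fun z => b.repr z k ∈ K) hu
        (fun c hc z _ => ?_) (fun x y hx hy => ?_)
      · show (b.repr (c • z)) k ∈ K
        rw [map_smul, Finsupp.smul_apply, smul_eq_mul]
        exact Ideal.mul_mem_right _ _ hc
      · show (b.repr (x + y)) k ∈ K
        rw [map_add, Finsupp.add_apply]
        exact Ideal.add_mem _ hx hy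
    · intro hu
      rw [← b.sum_repr u]
      apply Submodule.sum_mem
      intro m _
      exact Submodule.smul_mem_smul (hu m) Submodule.mem_top
  have hJσ : ∀ z ∈ J, σ z ∈ J := by
    intro z hz
    obtain ⟨y, hy⟩ := Stmt9Aux.sigma_multiple R p ℓ hℓ hmax hp σ hσ z
    rw [hy]
    exact Ideal.mul_mem_left _ _ hz
  have hσσ : ∀ z, σ (σ z) = z := Stmt9Aux.sigma_sigma R p ℓ σ hσ
  constructor
  · intro hP
    refine (hmem J v).mpr ?_
    intro k
    have hPh : ∀ w ∈ (I • (⊤ : Submodule (Aext R p ℓ) V)), h v w = 0 := by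
      intro w hw
      have key : ∀ a : Aext R p ℓ, a * h v w + σ (a * h v w) = 0 := by
        intro a
        have haw : a • w ∈ I • (⊤ : Submodule (Aext R p ℓ) V) := Submodule.smul_mem _ a hw
        have h0 := hf v (a • w)
        rw [hP (a • w) haw, mul_zero, map_zero, hs2] at h0
        exact h0.symm
      have k1 := key 1
      rw [one_mul] at k1
      exact Stmt9Aux.trace_zero R p ℓ hℓ hmax hp hp' h2R σ hσ _ k1 (key (piA R p ℓ))
    have hσx : ∀ k', σ (b.repr v k') ∈ J := by
      intro k'
      rcases k' with j | j
      · rw [hJ]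
        intro c hc
        have hcb : c • b (Sum.inr j) ∈ I • (⊤ : Submodule (Aext R p ℓ) V) :=
          Submodule.smul_mem_smul hc Submodule.mem_top
        have h0 := hPh _ hcb
        rw [hs2, hcoord1 v j] at h0
        rw [mul_comm]
        exact h0
      · rw [hJ]
        intro c hc
        have hcb : c • b (Sum.inl j) ∈ I • (⊤ : Submodule (Aext R p ℓ) V) :=
          Submodule.smul_mem_smul hc Submodule.mem_top
        have h0 := hPh _ hcb
        rw [hs2, hcoord2 v j] at h0
        linear_combination -h0
    have h0 := hJσ _ (hσx k)
    rwa [hσσ] at h0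
  · intro hQ w hw
    have hvb : ∀ m, h v (b m) ∈ J := by
      intro m
      rcases m with j | j
      · rw [hcoord2 v j]
        exact neg_mem (hJσ _ ((hmem J v).mp hQ (Sum.inr j)))
      · rw [hcoord1 v j]
        exact hJσ _ ((hmem J v).mp hQ (Sum.inl j))
    have hvu : ∀ u : V, h v u ∈ J := by
      intro u
      let G : V →+ Aext R p ℓ := AddMonoidHom.mk' (h v) (hadd2 v)
      have e : h v u = ∑ m, b.repr u m * h v (b m) := by
        have hGu : h v u = G u := rfl
        rw [hGu]
        conv_lhs => rw [← b.sum_repr u]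
        rw [map_sum]
        exact Finset.sum_congr rfl (fun m _ => hs2 _ _ _)
      rw [e]
      exact Ideal.sum_mem _ (fun m _ => Ideal.mul_mem_left _ _ (hvb m))
    have hhw : h v w = 0 := by
      refine Submodule.smul_induction_on (p := fun z => h v z = 0) hw
        (fun c hc z _ => ?_) (fun x y hx hy => ?_)
      · show h v (c • z) = 0
        rw [hs2, mul_comm]
        exact (hJ _).mp (hvu z) c hc
      · show h v (x + y) = 0
        rw [hadd2, hx, hy, add_zero]
    have h0 := hf v w
    rw [hhw, map_zero, add_zero] at h0
    have h1 : 2 * f v w = 0 := hinj _ h0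
    exact (h2R.mul_right_eq_zero).mp h1
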